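/- arXiv:2501.03239 — 4 statements merged into one kernel-verified Lean document; each statement's English description precedes it below -/
import Mathlib

section
/- (Theorem 1) Let α < β be real numbers and (b_m)_{m≥1} a sequence of positive real numbers with lim_{m→∞} b_m²/m = 0. Let g : ℝ → ℝ be bounded and uniformly continuous. Then the shifted m-th Bernstein–Chlodowsky operators converge to g uniformly on the intervals J_m = [α b_m, β b_m]; that is, sup_{x ∈ [α b_m, β b_m]} |B̃_m^{Cl}(g, J_m)(x) − g(x)| → 0 as m → ∞. -/
open Finset Filter Real

/-- Shifted Bernstein–Chlodowsky basis polynomial on `J = [αb, βb]`. -/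
noncomputable def qt (α β b : ℝ) (m k : ℕ) (x : ℝ) : ℝ :=
  (1 / ((β - α) ^ m * b ^ m)) * (m.choose k : ℝ) * (x - α * b) ^ k * (β * b - x) ^ (m - k)

/-- Shifted univariate `m`-th Bernstein–Chlodowsky operator on `J = [αb, βb]`. -/
noncomputable def BCl (α β b : ℝ) (m : ℕ) (g : ℝ → ℝ) (x : ℝ) : ℝ :=
  ∑ k ∈ Finset.range (m + 1), g ((β - α) * k * b / m + α * b) * qt α β b m k x

noncomputable def Bp (m k : ℕ) (t : ℝ) : ℝ := (m.choose k : ℝ) * t ^ k * (1 - t) ^ (m - k)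

lemma Bp_eval (m k : ℕ) (t : ℝ) : (bernsteinPolynomial ℝ m k).eval t = Bp m k t := by
  simp [bernsteinPolynomial, Bp]

lemma Bp_sum (m : ℕ) (t : ℝ) : ∑ k ∈ range (m + 1), Bp m k t = 1 := by
  have h := bernsteinPolynomial.sum ℝ m
  have := congrArg (Polynomial.eval t) h
  simpa [Polynomial.eval_finset_sum, Bp_eval] using this

lemma Bp_var (m : ℕ) (t : ℝ) :
    ∑ k ∈ range (m + 1), ((m : ℝ) * t - k) ^ 2 * Bp m k t = m * t * (1 - t) := by
  have h := bernsteinPolynomial.variance ℝ m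
  have := congrArg (Polynomial.eval t) h
  simpa [Polynomial.eval_finset_sum, Bp_eval, nsmul_eq_mul] using this

lemma Bp_nonneg (m k : ℕ) {t : ℝ} (h0 : 0 ≤ t) (h1 : t ≤ 1) : 0 ≤ Bp m k t := by
  have : (0:ℝ) ≤ 1 - t := by linarith
  unfold Bp; positivity

lemma Bp_var' (m : ℕ) (hm : 1 ≤ m) (t : ℝ) :
    ∑ k ∈ range (m + 1), ((k : ℝ) / m - t) ^ 2 * Bp m k t = t * (1 - t) / m := by
  have hm' : (m : ℝ) ≠ 0 := Nat.cast_ne_zero.mpr (by omega)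
  have h := Bp_var m t
  have hc : ∀ k ∈ range (m + 1), ((k : ℝ) / m - t) ^ 2 * Bp m k t
      = ((m : ℝ) * t - k) ^ 2 * Bp m k t / m ^ 2 := by
    intro k _
    rw [div_sub' hm', div_pow, div_mul_eq_mul_div]
    congr 1
    ring
  rw [Finset.sum_congr rfl hc, ← Finset.sum_div, h]
  field_simp

lemma qt_eq_Bp {α β b : ℝ} (hαβ : α < β) (hb : 0 < b) (m k : ℕ) (hk : k ≤ m) (x : ℝ) :
    qt α β b m k x = Bp m k ((x - α * b) / ((β - α) * b)) := by
  have hab : (0:ℝ) < β - α := by linarith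
  have hd : (β - α) * b ≠ 0 := by positivity
  set t := (x - α * b) / ((β - α) * b) with ht
  have hx1 : x - α * b = t * ((β - α) * b) := by
    rw [ht, div_mul_cancel₀ _ hd]
  have hx2 : β * b - x = (1 - t) * ((β - α) * b) := by
    have : β * b - x = (β - α) * b - (x - α * b) := by ring
    rw [this, hx1]; ring
  have hne : (β - α) ^ m * b ^ m ≠ 0 := by positivity
  have hpow : ((β - α) * b) ^ k * (((β - α) * b) ^ (m - k)) = (β - α) ^ m * b ^ m := by
    rw [← pow_add, show k + (m - k) = m by omega, mul_pow]
  rw [qt, Bp, hx1, hx2, mul_pow t ((β - α) * b) k, mul_pow (1 - t) ((β - α) * b) (m - k)]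
  have key : 1 / ((β - α) ^ m * b ^ m) * (m.choose k : ℝ) * (t ^ k * ((β - α) * b) ^ k) *
      ((1 - t) ^ (m - k) * ((β - α) * b) ^ (m - k))
      = (m.choose k : ℝ) * t ^ k * (1 - t) ^ (m - k) *
        (((β - α) * b) ^ k * (((β - α) * b) ^ (m - k)) / ((β - α) ^ m * b ^ m)) := by
    ring
  rw [key, hpow, div_self hne, mul_one]

theorem stmt9 (α β : ℝ) (hαβ : α < β) (b : ℕ → ℝ) (hb : ∀ m, 1 ≤ m → 0 < b m)
    (hlim : Filter.Tendsto (fun m : ℕ => (b m) ^ 2 / m) Filter.atTop (nhds 0))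
    (g : ℝ → ℝ) (hgbdd : ∃ C, ∀ x, |g x| ≤ C) (hgu : UniformContinuous g) :
    ∀ ε > 0, ∃ N, ∀ m ≥ N, 1 ≤ m → ∀ x ∈ Set.Icc (α * b m) (β * b m),
      |BCl α β (b m) m g x - g x| < ε := by
  intro ε hε
  obtain ⟨C, hC⟩ := hgbdd
  have hC0 : 0 ≤ C := le_trans (abs_nonneg _) (hC 0)
  obtain ⟨δ, hδ, hgδ⟩ := Metric.uniformContinuous_iff.mp hgu (ε / 2) (by linarith)
  set c : ℝ := 2 * C / δ ^ 2 with hc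
  have hc0 : 0 ≤ c := by positivity
  -- pointwise modulus bound
  have hpt : ∀ u v : ℝ, |g u - g v| ≤ ε / 2 + c * (u - v) ^ 2 := by
    intro u v
    rcases lt_or_ge (dist u v) δ with h | h
    · have h1 := hgδ h
      rw [Real.dist_eq] at h1
      have h2 : 0 ≤ c * (u - v) ^ 2 := by positivity
      linarith
    · have h2 : δ ^ 2 ≤ (u - v) ^ 2 := by
        rw [Real.dist_eq] at h
        rw [← sq_abs (u - v)]
        exact pow_le_pow_left₀ hδ.le h 2
      have hgb : |g u - g v| ≤ 2 * C := by
        calc |g u - g v| ≤ |g u| + |g v| := abs_sub _ _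
          _ ≤ 2 * C := by have := hC u; have := hC v; linarith
      have h3 : c * δ ^ 2 ≤ c * (u - v) ^ 2 := mul_le_mul_of_nonneg_left h2 hc0
      have h4 : c * δ ^ 2 = 2 * C := by
        rw [hc, div_mul_cancel₀]
        positivity
      linarith
  set K : ℝ := c * ((β - α) ^ 2 / 4) with hK
  have hK0 : 0 ≤ K := by positivity
  have hpos : (0:ℝ) < ε / (2 * (K + 1)) := by positivity
  obtain ⟨N, hN⟩ := eventually_atTop.mp (hlim.eventually_lt_const hpos)
  refine ⟨N, fun m hm hm1 x hx => ?_⟩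
  have hbm : 0 < b m := hb m hm1
  have hab : (0:ℝ) < β - α := by linarith
  have hd : (0:ℝ) < (β - α) * b m := by positivity
  set t := (x - α * (b m)) / ((β - α) * (b m)) with ht
  have ht0 : 0 ≤ t := div_nonneg (by linarith [hx.1]) hd.le
  have ht1 : t ≤ 1 := by
    rw [ht, div_le_one hd]
    have := hx.2; nlinarith
  have hmR : (0:ℝ) < m := by exact_mod_cast hm1
  have hm' : (m:ℝ) ≠ 0 := ne_of_gt hmR
  set xk : ℕ → ℝ := fun k => (β - α) * k * (b m) / m + α * (b m) with hxk
  have hxkx : ∀ k : ℕ, xk k - x = (β - α) * (b m) * ((k : ℝ) / m - t) := by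
    intro k
    have hx' : x = t * ((β - α) * b m) + α * b m := by
      rw [ht, div_mul_cancel₀ _ (ne_of_gt hd)]; ring
    rw [hxk, hx']
    field_simp
    ring
  have hdiff : BCl α β (b m) m g x - g x
      = ∑ k ∈ range (m + 1), (g (xk k) - g x) * Bp m k t := by
    have h1 : BCl α β (b m) m g x = ∑ k ∈ range (m + 1), g (xk k) * Bp m k t := by
      rw [BCl]
      refine Finset.sum_congr rfl (fun k hk => ?_)
      rw [qt_eq_Bp hαβ hbm m k (Nat.lt_succ_iff.mp (Finset.mem_range.mp hk)) x]
    have h2 : ∑ k ∈ range (m + 1), (g (xk k) - g x) * Bp m k t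
        = (∑ k ∈ range (m + 1), g (xk k) * Bp m k t)
          - g x * ∑ k ∈ range (m + 1), Bp m k t := by
      rw [Finset.mul_sum, ← Finset.sum_sub_distrib]
      exact Finset.sum_congr rfl fun k _ => by ring
    rw [h1, h2, Bp_sum, mul_one]
  have hvar : ∑ k ∈ range (m + 1), (xk k - x) ^ 2 * Bp m k t
      = (β - α) ^ 2 * (b m) ^ 2 * (t * (1 - t) / m) := by
    have hcong : ∀ k ∈ range (m + 1), (xk k - x) ^ 2 * Bp m k t
        = (β - α) ^ 2 * (b m) ^ 2 * (((k : ℝ) / m - t) ^ 2 * Bp m k t) := by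
      intro k _; rw [hxkx k]; ring
    rw [Finset.sum_congr rfl hcong, ← Finset.mul_sum, Bp_var' m hm1 t]
  have hmain : |BCl α β (b m) m g x - g x|
      ≤ ε / 2 + c * ((β - α) ^ 2 * (b m) ^ 2 * (t * (1 - t) / m)) := by
    rw [hdiff]
    calc |∑ k ∈ range (m + 1), (g (xk k) - g x) * Bp m k t|
        ≤ ∑ k ∈ range (m + 1), |(g (xk k) - g x) * Bp m k t| :=
          Finset.abs_sum_le_sum_abs _ _
      _ ≤ ∑ k ∈ range (m + 1), (ε / 2 + c * (xk k - x) ^ 2) * Bp m k t := by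
          refine Finset.sum_le_sum fun k _ => ?_
          rw [abs_mul, abs_of_nonneg (Bp_nonneg m k ht0 ht1)]
          exact mul_le_mul_of_nonneg_right (hpt _ _) (Bp_nonneg m k ht0 ht1)
      _ = ε / 2 * (∑ k ∈ range (m + 1), Bp m k t)
            + c * ∑ k ∈ range (m + 1), (xk k - x) ^ 2 * Bp m k t := by
          rw [Finset.mul_sum, Finset.mul_sum, ← Finset.sum_add_distrib]
          exact Finset.sum_congr rfl fun k _ => by ring
      _ = ε / 2 + c * ((β - α) ^ 2 * (b m) ^ 2 * (t * (1 - t) / m)) := by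
          rw [Bp_sum, hvar, mul_one]
  have hlast : c * ((β - α) ^ 2 * (b m) ^ 2 * (t * (1 - t) / m)) < ε / 2 := by
    have ht4 : t * (1 - t) ≤ 1 / 4 := by nlinarith [sq_nonneg (t - 1 / 2)]
    have hb2 : 0 ≤ (b m) ^ 2 / m := by positivity
    have e1 : c * ((β - α) ^ 2 * (b m) ^ 2 * (t * (1 - t) / m))
        = (c * (β - α) ^ 2 * ((b m) ^ 2 / m)) * (t * (1 - t)) := by
      field_simp
    have e2 : K * ((b m) ^ 2 / m) = (c * (β - α) ^ 2 * ((b m) ^ 2 / m)) * (1 / 4) := by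
      rw [hK]; ring
    have hbound1 : c * ((β - α) ^ 2 * (b m) ^ 2 * (t * (1 - t) / m)) ≤ K * ((b m) ^ 2 / m) := by
      rw [e1, e2]
      exact mul_le_mul_of_nonneg_left ht4 (by positivity)
    have hbound2 : K * ((b m) ^ 2 / m) ≤ (K + 1) * ((b m) ^ 2 / m) :=
      mul_le_mul_of_nonneg_right (by linarith) hb2
    have hbound3 : (K + 1) * ((b m) ^ 2 / m) < (K + 1) * (ε / (2 * (K + 1))) :=
      mul_lt_mul_of_pos_left (hN m hm) (by linarith)
    have heq : (K + 1) * (ε / (2 * (K + 1))) = ε / 2 := by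
      field_simp
    linarith
  linarith
end

section
/- Let α < β, b > 0, let φ₁, φ₂ : ℝ → ℝ be continuous with φ₁(x) < φ₂(x) for all x ∈ J = [αb, βb], let m ≥ 1 be a natural number, and let m_k ≥ 1 be positive integers for 0 ≤ k ≤ m. Then for every x ∈ J and every y ∈ ℝ, the bivariate shifted Bernstein–Chlodowsky–Stancu operator applied to the coordinate function (x,y) ↦ y satisfies the exact identity B̃_m^{Cl}[y; Δ](x, y) = ((y − φ₁(x))/(φ₂(x) − φ₁(x))) · B̃_m^{Cl}(φ₂ − φ₁, J)(x) + B̃_m^{Cl}(φ₁, J)(x), where B̃_m^{Cl}(h, J)(x) = Σ_{k=0}^{m} h((β−α)·k·b/m + αb) · q̃_{m,k}(x; J) denotes the univariate shifted Bernstein–Chlodowsky operator. -/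
open Finset Filter Real

/-- Basis polynomial `q̃_{n,j}(y; [φ₁(x), φ₂(x)])`. -/
noncomputable def qy (φ₁ φ₂ : ℝ → ℝ) (x : ℝ) (n j : ℕ) (y : ℝ) : ℝ :=
  (n.choose j : ℝ) * ((y - φ₁ x) / (φ₂ x - φ₁ x)) ^ j *
    ((φ₂ x - y) / (φ₂ x - φ₁ x)) ^ (n - j)

/-- Bivariate shifted Bernstein–Chlodowsky–Stancu operator on the domain `Δ`
bounded by `y = φ₁(x)`, `y = φ₂(x)`, `x = αb`, `x = βb`. -/
noncomputable def BivCl (α β b : ℝ) (φ₁ φ₂ : ℝ → ℝ) (m : ℕ) (mk : ℕ → ℕ)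
    (g : ℝ → ℝ → ℝ) (x y : ℝ) : ℝ :=
  ∑ k ∈ Finset.range (m + 1), ∑ j ∈ Finset.range (mk k + 1),
    g ((β - α) * b * ((k : ℝ) / m) + α * b)
      ((φ₂ ((β - α) * b * ((k : ℝ) / m) + α * b) - φ₁ ((β - α) * b * ((k : ℝ) / m) + α * b)) *
          ((j : ℝ) / mk k) + φ₁ ((β - α) * b * ((k : ℝ) / m) + α * b)) *
      qt α β b m k x * qy φ₁ φ₂ x (mk k) j y

lemma bern_sum (n : ℕ) (u : ℝ) :
    ∑ j ∈ Finset.range (n+1), (n.choose j : ℝ) * u^j * (1-u)^(n-j) = 1 := by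
  have h := congrArg (Polynomial.eval u) (bernsteinPolynomial.sum ℝ n)
  simpa [bernsteinPolynomial, Polynomial.eval_finset_sum, mul_comm, mul_assoc,
    mul_left_comm] using h

lemma bern_mom (n : ℕ) (u : ℝ) :
    ∑ j ∈ Finset.range (n+1), (j : ℝ) * ((n.choose j : ℝ) * u^j * (1-u)^(n-j)) = n * u := by
  have h := congrArg (Polynomial.eval u) (bernsteinPolynomial.sum_smul ℝ n)
  simpa [bernsteinPolynomial, Polynomial.eval_finset_sum, mul_comm, mul_assoc,
    mul_left_comm] using h

theorem stmt14 (α β b : ℝ) (hαβ : α < β) (hb : 0 < b)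
    (φ₁ φ₂ : ℝ → ℝ) (hφ₁ : Continuous φ₁) (hφ₂ : Continuous φ₂)
    (hφ : ∀ x ∈ Set.Icc (α * b) (β * b), φ₁ x < φ₂ x)
    (m : ℕ) (hm : 1 ≤ m) (mk : ℕ → ℕ) (hmk : ∀ k ≤ m, 1 ≤ mk k)
    (x : ℝ) (hx : x ∈ Set.Icc (α * b) (β * b)) (y : ℝ) :
    BivCl α β b φ₁ φ₂ m mk (fun _ t => t) x y =
      ((y - φ₁ x) / (φ₂ x - φ₁ x)) * BCl α β b m (fun t => φ₂ t - φ₁ t) x +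
        BCl α β b m φ₁ x := by
  have hlt := hφ x hx
  have hne : φ₂ x - φ₁ x ≠ 0 := by linarith
  set u : ℝ := (y - φ₁ x) / (φ₂ x - φ₁ x) with hu
  have hw : (φ₂ x - y) / (φ₂ x - φ₁ x) = 1 - u := by
    rw [hu]; field_simp; ring
  have inner : ∀ k ∈ Finset.range (m + 1),
      (∑ j ∈ Finset.range (mk k + 1),
        (fun _ t => t) ((β - α) * b * ((k : ℝ) / m) + α * b)
          ((φ₂ ((β - α) * b * ((k : ℝ) / m) + α * b) - φ₁ ((β - α) * b * ((k : ℝ) / m) + α * b)) *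
              ((j : ℝ) / mk k) + φ₁ ((β - α) * b * ((k : ℝ) / m) + α * b)) *
          qt α β b m k x * qy φ₁ φ₂ x (mk k) j y) =
      ((φ₂ ((β - α) * (k : ℝ) * b / m + α * b) - φ₁ ((β - α) * (k : ℝ) * b / m + α * b)) * u +
        φ₁ ((β - α) * (k : ℝ) * b / m + α * b)) * qt α β b m k x := by
    intro k hk
    have hxk : (β - α) * b * ((k : ℝ) / m) + α * b = (β - α) * (k : ℝ) * b / m + α * b := by
      ring
    have hn : (mk k : ℝ) ≠ 0 := by
      exact_mod_cast Nat.one_le_iff_ne_zero.mp (hmk k (Nat.lt_succ_iff.mp (Finset.mem_range.mp hk)))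
    simp only [hxk, qy, hw, ← hu]
    set c := φ₂ ((β - α) * (k : ℝ) * b / m + α * b) - φ₁ ((β - α) * (k : ℝ) * b / m + α * b)
    set d := φ₁ ((β - α) * (k : ℝ) * b / m + α * b)
    set Q := qt α β b m k x
    have : ∀ j ∈ Finset.range (mk k + 1),
        (c * ((j : ℝ) / mk k) + d) * Q * ((mk k).choose j * u ^ j * (1-u) ^ (mk k - j)) =
        (c * Q / mk k) * ((j : ℝ) * ((mk k).choose j * u ^ j * (1-u) ^ (mk k - j)))
          + (d * Q) * ((mk k).choose j * u ^ j * (1-u) ^ (mk k - j)) := by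
      intro j _
      field_simp
    rw [Finset.sum_congr rfl this, Finset.sum_add_distrib, ← Finset.mul_sum, ← Finset.mul_sum,
      bern_mom, bern_sum]
    field_simp
  rw [BivCl, Finset.sum_congr rfl inner, BCl, BCl]
  rw [Finset.mul_sum, ← Finset.sum_add_distrib]
  refine Finset.sum_congr rfl fun k _ => ?_
  ring
end

section
/- (Lemma 2(iii)) Let α < β, let (b_m)_{m≥1} be positive reals with lim_{m→∞} b_m²/m = 0, and let φ₁, φ₂ : ℝ → ℝ be bounded, uniformly continuous functions with φ₁(x) < φ₂(x) for all x ∈ ℝ. For each m ≥ 1 let m_k ≥ 1 (0 ≤ k ≤ m) be positive integers, let J_m = [α b_m, β b_m], and let Δ_m = {(x,y) : α b_m ≤ x ≤ β b_m, φ₁(x) ≤ y ≤ φ₂(x)}. Then the bivariate shifted Bernstein–Chlodowsky–Stancu operators applied to the coordinate function (x,y) ↦ y converge to y uniformly: sup_{(x,y) ∈ Δ_m} |B̃_m^{Cl}[y; Δ_m](x, y) − y| → 0 as m → ∞. -/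
open Finset Filter Real

/-- The classical Bernstein basis function. -/
noncomputable def bb (n ν : ℕ) (t : ℝ) : ℝ := (n.choose ν : ℝ) * t ^ ν * (1 - t) ^ (n - ν)

lemma bb_nonneg {n ν : ℕ} {t : ℝ} (h0 : 0 ≤ t) (h1 : t ≤ 1) : 0 ≤ bb n ν t := by
  have : 0 ≤ 1 - t := by linarith
  unfold bb; positivity

lemma bb_sum (n : ℕ) (t : ℝ) : ∑ ν ∈ Finset.range (n + 1), bb n ν t = 1 := by
  have := congrArg (Polynomial.eval t) (bernsteinPolynomial.sum ℝ n)
  simpa [Polynomial.eval_finset_sum, bernsteinPolynomial, bb] using this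

lemma bb_var (n : ℕ) (t : ℝ) :
    ∑ ν ∈ Finset.range (n + 1), ((n : ℝ) * t - ν) ^ 2 * bb n ν t = n * t * (1 - t) := by
  have := congrArg (Polynomial.eval t) (bernsteinPolynomial.variance ℝ n)
  simpa [Polynomial.eval_finset_sum, bernsteinPolynomial, bb] using this

lemma qt_eq' (c : ℝ) (hc : c ≠ 0) {m k : ℕ} (hk : k ≤ m) (t : ℝ) :
    (1 / c ^ m) * (m.choose k : ℝ) * (c * t) ^ k * (c * (1 - t)) ^ (m - k) = bb m k t := by
  have key : c ^ k * c ^ (m - k) = c ^ m := by rw [← pow_add, Nat.add_sub_cancel' hk]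
  have hcm : (c : ℝ) ^ m ≠ 0 := pow_ne_zero _ hc
  rw [bb, mul_pow, mul_pow]
  field_simp
  linear_combination ((m.choose k : ℝ) * t ^ k * (1 - t) ^ (m - k)) * key

lemma qt_eq (α β b : ℝ) (hc : 0 < (β - α) * b) {m k : ℕ} (hk : k ≤ m) (x : ℝ) :
    qt α β b m k x = bb m k ((x - α * b) / ((β - α) * b)) := by
  have hc0 : (β - α) * b ≠ 0 := ne_of_gt hc
  have e1 : x - α * b = ((β - α) * b) * ((x - α * b) / ((β - α) * b)) := by
    rw [mul_div_assoc', mul_div_cancel_left₀ _ hc0]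
  have e2 : β * b - x = ((β - α) * b) * (1 - (x - α * b) / ((β - α) * b)) := by
    rw [mul_sub, mul_one, mul_div_assoc', mul_div_cancel_left₀ _ hc0]; ring
  have e3 : (β - α) ^ m * b ^ m = ((β - α) * b) ^ m := (mul_pow _ _ _).symm
  rw [qt]
  conv_lhs => rw [e3, e1, e2]
  exact qt_eq' _ hc0 hk _

lemma qy_eq (φ₁ φ₂ : ℝ → ℝ) (x : ℝ) (hφ : φ₁ x < φ₂ x) (n j : ℕ) (y : ℝ) :
    qy φ₁ φ₂ x n j y = bb n j ((y - φ₁ x) / (φ₂ x - φ₁ x)) := by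
  have hd : φ₂ x - φ₁ x ≠ 0 := by linarith
  have h : (φ₂ x - y) / (φ₂ x - φ₁ x) = 1 - (y - φ₁ x) / (φ₂ x - φ₁ x) := by
    field_simp; ring
  rw [qy, bb, h]

lemma innerSumBB (A c s : ℝ) {n : ℕ} (hn : 1 ≤ n) :
    ∑ j ∈ Finset.range (n + 1), (A * ((j : ℝ) / n) + c) * bb n j s = A * s + c := by
  have hn0 : (n : ℝ) ≠ 0 := by positivity
  have h1 : ∑ ν ∈ Finset.range (n + 1), bb n ν s = 1 := bb_sum n s
  have h2 : ∑ ν ∈ Finset.range (n + 1), (ν : ℝ) * bb n ν s = n * s := by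
    have := congrArg (Polynomial.eval s) (bernsteinPolynomial.sum_smul ℝ n)
    simpa [Polynomial.eval_finset_sum, bernsteinPolynomial, bb, mul_comm] using this
  have h3 : ∑ j ∈ Finset.range (n + 1), (A * ((j : ℝ) / n) + c) * bb n j s
      = (A / n) * (∑ j ∈ Finset.range (n + 1), (j : ℝ) * bb n j s)
        + c * (∑ j ∈ Finset.range (n + 1), bb n j s) := by
    rw [Finset.mul_sum, Finset.mul_sum, ← Finset.sum_add_distrib]
    apply Finset.sum_congr rfl; intro j _; ring
  rw [h3, h1, h2]
  field_simp

lemma step_lemma (α β b : ℝ) (hc : 0 < (β - α) * b) (φ₁ φ₂ : ℝ → ℝ) (hφ : ∀ x, φ₁ x < φ₂ x)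
    (m : ℕ) (mk : ℕ → ℕ) (hmk : ∀ k ≤ m, 1 ≤ mk k) (x y : ℝ) :
    BivCl α β b φ₁ φ₂ m mk (fun _ t => t) x y =
      ∑ k ∈ Finset.range (m + 1),
        ((φ₂ ((β - α) * b * ((k : ℝ) / m) + α * b) - φ₁ ((β - α) * b * ((k : ℝ) / m) + α * b)) *
            ((y - φ₁ x) / (φ₂ x - φ₁ x)) + φ₁ ((β - α) * b * ((k : ℝ) / m) + α * b)) *
          bb m k ((x - α * b) / ((β - α) * b)) := by
  rw [BivCl]
  refine Finset.sum_congr rfl fun k hk => ?_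
  have hkm : k ≤ m := Nat.lt_succ_iff.mp (Finset.mem_range.mp hk)
  have h1 : ∑ j ∈ Finset.range (mk k + 1),
      (fun _ t => t) ((β - α) * b * ((k : ℝ) / m) + α * b)
        ((φ₂ ((β - α) * b * ((k : ℝ) / m) + α * b) - φ₁ ((β - α) * b * ((k : ℝ) / m) + α * b)) *
            ((j : ℝ) / mk k) + φ₁ ((β - α) * b * ((k : ℝ) / m) + α * b)) *
        qt α β b m k x * qy φ₁ φ₂ x (mk k) j y
      = ∑ j ∈ Finset.range (mk k + 1),
        ((φ₂ ((β - α) * b * ((k : ℝ) / m) + α * b) - φ₁ ((β - α) * b * ((k : ℝ) / m) + α * b)) *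
            ((j : ℝ) / mk k) + φ₁ ((β - α) * b * ((k : ℝ) / m) + α * b)) *
          bb (mk k) j ((y - φ₁ x) / (φ₂ x - φ₁ x)) * bb m k ((x - α * b) / ((β - α) * b)) := by
    refine Finset.sum_congr rfl fun j _ => ?_
    rw [qt_eq α β b hc hkm, qy_eq φ₁ φ₂ x (hφ x)]
    ring
  rw [h1, ← Finset.sum_mul, innerSumBB _ _ _ (hmk k hkm)]

lemma phi_est (φ : ℝ → ℝ) (C : ℝ) (hC : ∀ z, |φ z| ≤ C) {δ ε' : ℝ} (hδ : 0 < δ) (hε : 0 ≤ ε')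
    (huc : ∀ u v : ℝ, |u - v| < δ → |φ u - φ v| ≤ ε') (u v : ℝ) :
    |φ u - φ v| ≤ ε' + (2 * C / δ ^ 2) * (u - v) ^ 2 := by
  have hC0 : 0 ≤ C := le_trans (abs_nonneg _) (hC u)
  by_cases h : |u - v| < δ
  · have h1 := huc u v h
    have h2 : 0 ≤ (2 * C / δ ^ 2) * (u - v) ^ 2 := by positivity
    linarith
  · push_neg at h
    have h2 : δ ^ 2 ≤ (u - v) ^ 2 := by nlinarith [sq_abs (u - v), abs_nonneg (u - v)]
    have h3 : |φ u - φ v| ≤ 2 * C := by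
      calc |φ u - φ v| ≤ |φ u| + |φ v| := abs_sub _ _
        _ ≤ 2 * C := by have := hC u; have := hC v; linarith
    have h4 : 2 * C ≤ (2 * C / δ ^ 2) * (u - v) ^ 2 := by
      rw [div_mul_eq_mul_div, le_div_iff₀ (by positivity)]
      nlinarith
    linarith

set_option maxHeartbeats 1000000 in
theorem stmt15 (α β : ℝ) (hαβ : α < β) (b : ℕ → ℝ) (hb : ∀ m, 1 ≤ m → 0 < b m)
    (hlim : Filter.Tendsto (fun m : ℕ => (b m) ^ 2 / m) Filter.atTop (nhds 0))
    (φ₁ φ₂ : ℝ → ℝ)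
    (hφ₁bdd : ∃ C, ∀ x, |φ₁ x| ≤ C) (hφ₂bdd : ∃ C, ∀ x, |φ₂ x| ≤ C)
    (hφ₁u : UniformContinuous φ₁) (hφ₂u : UniformContinuous φ₂)
    (hφ : ∀ x, φ₁ x < φ₂ x)
    (mk : ℕ → ℕ → ℕ) (hmk : ∀ m, ∀ k ≤ m, 1 ≤ mk m k) :
    ∀ ε > 0, ∃ N, ∀ m ≥ N, 1 ≤ m →
      ∀ x ∈ Set.Icc (α * b m) (β * b m), ∀ y ∈ Set.Icc (φ₁ x) (φ₂ x),
        |BivCl α β (b m) φ₁ φ₂ m (mk m) (fun _ t => t) x y - y| < ε := by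
  intro ε hε
  obtain ⟨C₁, hC₁⟩ := hφ₁bdd
  obtain ⟨C₂, hC₂⟩ := hφ₂bdd
  have hC₁0 : 0 ≤ C₁ := le_trans (abs_nonneg _) (hC₁ 0)
  have hC₂0 : 0 ≤ C₂ := le_trans (abs_nonneg _) (hC₂ 0)
  rw [Metric.uniformContinuous_iff] at hφ₁u hφ₂u
  obtain ⟨δ₁, hδ₁, h₁⟩ := hφ₁u (ε / 4) (by positivity)
  obtain ⟨δ₂, hδ₂, h₂⟩ := hφ₂u (ε / 4) (by positivity)
  set δ := min δ₁ δ₂ with hδdef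
  have hδ : 0 < δ := lt_min hδ₁ hδ₂
  have huc1 : ∀ u v : ℝ, |u - v| < δ → |φ₁ u - φ₁ v| ≤ ε / 4 := by
    intro u v h
    have hd : dist u v < δ₁ := by
      rw [Real.dist_eq]; exact lt_of_lt_of_le h (min_le_left _ _)
    have := h₁ hd
    rw [Real.dist_eq] at this; linarith
  have huc2 : ∀ u v : ℝ, |u - v| < δ → |φ₂ u - φ₂ v| ≤ ε / 4 := by
    intro u v h
    have hd : dist u v < δ₂ := by
      rw [Real.dist_eq]; exact lt_of_lt_of_le h (min_le_right _ _)
    have := h₂ hd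
    rw [Real.dist_eq] at this; linarith
  set K := (2 * C₁ + 2 * C₂) / δ ^ 2 with hK
  have hK0 : 0 ≤ K := by positivity
  set D := K * (β - α) ^ 2 / 4 with hD
  have hD0 : 0 ≤ D := by positivity
  obtain ⟨N, hN⟩ := Metric.tendsto_atTop.mp hlim (ε / (2 * (D + 1))) (by positivity)
  refine ⟨N, fun m hm hm1 x hx y hy => ?_⟩
  have hbm : 0 < b m := hb m hm1
  have hc : 0 < (β - α) * b m := mul_pos (by linarith) hbm
  have hc0 : (β - α) * b m ≠ 0 := ne_of_gt hc
  have hm0 : (0 : ℝ) < m := by exact_mod_cast hm1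
  have hm0' : (m : ℝ) ≠ 0 := ne_of_gt hm0
  obtain ⟨hx1, hx2⟩ := hx
  obtain ⟨hy1, hy2⟩ := hy
  have hdpos : 0 < φ₂ x - φ₁ x := by have := hφ x; linarith
  have step := step_lemma α β (b m) hc φ₁ φ₂ hφ m (mk m) (fun k hk => hmk m k hk) x y
  set t := (x - α * b m) / ((β - α) * b m) with htdef
  set s := (y - φ₁ x) / (φ₂ x - φ₁ x) with hsdef
  have ht0 : 0 ≤ t := div_nonneg (by linarith) (le_of_lt hc)
  have ht1 : t ≤ 1 := by
    rw [htdef, div_le_one hc]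
    have : (β - α) * b m = β * b m - α * b m := by ring
    linarith
  have hs0 : 0 ≤ s := div_nonneg (by linarith) (le_of_lt hdpos)
  have hs1 : s ≤ 1 := by rw [hsdef, div_le_one hdpos]; linarith
  have hyeq : (φ₂ x - φ₁ x) * s + φ₁ x = y := by
    rw [hsdef]; field_simp; ring
  -- per-k bound
  have key1 : ∀ k ∈ Finset.range (m + 1),
      |((φ₂ ((β - α) * b m * ((k : ℝ) / m) + α * b m) -
            φ₁ ((β - α) * b m * ((k : ℝ) / m) + α * b m)) * s +
          φ₁ ((β - α) * b m * ((k : ℝ) / m) + α * b m)) - y|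
        ≤ ε / 2 + K * (((β - α) * b m * ((k : ℝ) / m) + α * b m) - x) ^ 2 := by
    intro k _
    set u := (β - α) * b m * ((k : ℝ) / m) + α * b m with hu
    have e1 := phi_est φ₁ C₁ hC₁ hδ (by positivity) huc1 u x
    have e2 := phi_est φ₂ C₂ hC₂ hδ (by positivity) huc2 u x
    have hdiff : ((φ₂ u - φ₁ u) * s + φ₁ u) - y
        = s * (φ₂ u - φ₂ x) + (1 - s) * (φ₁ u - φ₁ x) := by
      rw [← hyeq]; ring
    rw [hdiff]
    have habs : |s * (φ₂ u - φ₂ x) + (1 - s) * (φ₁ u - φ₁ x)|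
        ≤ |φ₂ u - φ₂ x| + |φ₁ u - φ₁ x| := by
      calc |s * (φ₂ u - φ₂ x) + (1 - s) * (φ₁ u - φ₁ x)|
          ≤ |s * (φ₂ u - φ₂ x)| + |(1 - s) * (φ₁ u - φ₁ x)| := abs_add_le _ _
        _ = s * |φ₂ u - φ₂ x| + (1 - s) * |φ₁ u - φ₁ x| := by
            rw [abs_mul, abs_mul, abs_of_nonneg hs0,
              abs_of_nonneg (by linarith : (0 : ℝ) ≤ 1 - s)]
        _ ≤ _ := by nlinarith [abs_nonneg (φ₂ u - φ₂ x), abs_nonneg (φ₁ u - φ₁ x)]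
    have hKsplit : (2 * C₁ / δ ^ 2) * (u - x) ^ 2 + (2 * C₂ / δ ^ 2) * (u - x) ^ 2
        = K * (u - x) ^ 2 := by rw [hK]; ring
    linarith
  -- rewrite the distance of each node to x
  have key2 : ∀ k : ℕ,
      (((β - α) * b m * ((k : ℝ) / m) + α * b m) - x) ^ 2
        = ((β - α) * b m) ^ 2 / (m : ℝ) ^ 2 * ((m : ℝ) * t - k) ^ 2 := by
    intro k
    have hct : ((β - α) * b m) * t = x - α * b m := by
      rw [htdef, mul_div_assoc', mul_div_cancel_left₀ _ hc0]
    have hxeq : ((β - α) * b m * ((k : ℝ) / m) + α * b m) - x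
        = ((β - α) * b m) / m * ((k : ℝ) - (m : ℝ) * t) := by
      have expand : ((β - α) * b m) / m * ((k : ℝ) - (m : ℝ) * t)
          = ((β - α) * b m * ((k : ℝ) / m)) - ((m : ℝ) / m) * (((β - α) * b m) * t) := by
        ring
      rw [expand, div_self hm0', hct]
      ring
    rw [hxeq, mul_pow, div_pow]
    ring
  -- sum evaluation
  have sumeval : ∑ k ∈ Finset.range (m + 1),
      (ε / 2 + K * (((β - α) * b m * ((k : ℝ) / m) + α * b m) - x) ^ 2) * bb m k t
      = ε / 2 + K * (((β - α) * b m) ^ 2 / (m : ℝ) ^ 2) * ((m : ℝ) * t * (1 - t)) := by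
    calc ∑ k ∈ Finset.range (m + 1),
        (ε / 2 + K * (((β - α) * b m * ((k : ℝ) / m) + α * b m) - x) ^ 2) * bb m k t
        = ∑ k ∈ Finset.range (m + 1),
          (ε / 2 * bb m k t + (K * (((β - α) * b m) ^ 2 / (m : ℝ) ^ 2)) *
            (((m : ℝ) * t - k) ^ 2 * bb m k t)) := by
          refine Finset.sum_congr rfl fun k _ => ?_
          rw [key2 k]; ring
      _ = ε / 2 * (∑ k ∈ Finset.range (m + 1), bb m k t)
          + (K * (((β - α) * b m) ^ 2 / (m : ℝ) ^ 2)) *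
            (∑ k ∈ Finset.range (m + 1), ((m : ℝ) * t - k) ^ 2 * bb m k t) := by
          rw [Finset.sum_add_distrib, ← Finset.mul_sum, ← Finset.mul_sum]
      _ = _ := by rw [bb_sum, bb_var, mul_one]
  -- main estimate
  have hsub : ∑ k ∈ Finset.range (m + 1),
      (((φ₂ ((β - α) * b m * ((k : ℝ) / m) + α * b m) -
            φ₁ ((β - α) * b m * ((k : ℝ) / m) + α * b m)) * s +
          φ₁ ((β - α) * b m * ((k : ℝ) / m) + α * b m)) - y) * bb m k t
      = BivCl α β (b m) φ₁ φ₂ m (mk m) (fun _ t => t) x y - y := by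
    have hcong : ∀ k ∈ Finset.range (m + 1),
        (((φ₂ ((β - α) * b m * ((k : ℝ) / m) + α * b m) -
              φ₁ ((β - α) * b m * ((k : ℝ) / m) + α * b m)) * s +
            φ₁ ((β - α) * b m * ((k : ℝ) / m) + α * b m)) - y) * bb m k t
          = ((φ₂ ((β - α) * b m * ((k : ℝ) / m) + α * b m) -
              φ₁ ((β - α) * b m * ((k : ℝ) / m) + α * b m)) * s +
            φ₁ ((β - α) * b m * ((k : ℝ) / m) + α * b m)) * bb m k t - y * bb m k t :=
      fun k _ => by ring
    rw [Finset.sum_congr rfl hcong, Finset.sum_sub_distrib, ← Finset.mul_sum, bb_sum,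
      mul_one, ← step]
  have hbound : |BivCl α β (b m) φ₁ φ₂ m (mk m) (fun _ t => t) x y - y|
      ≤ ε / 2 + K * (((β - α) * b m) ^ 2 / (m : ℝ) ^ 2) * ((m : ℝ) * t * (1 - t)) := by
    rw [← hsub, ← sumeval]
    calc |∑ k ∈ Finset.range (m + 1),
        (((φ₂ ((β - α) * b m * ((k : ℝ) / m) + α * b m) -
              φ₁ ((β - α) * b m * ((k : ℝ) / m) + α * b m)) * s +
            φ₁ ((β - α) * b m * ((k : ℝ) / m) + α * b m)) - y) * bb m k t|
        ≤ ∑ k ∈ Finset.range (m + 1),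
          |(((φ₂ ((β - α) * b m * ((k : ℝ) / m) + α * b m) -
              φ₁ ((β - α) * b m * ((k : ℝ) / m) + α * b m)) * s +
            φ₁ ((β - α) * b m * ((k : ℝ) / m) + α * b m)) - y) * bb m k t| :=
          Finset.abs_sum_le_sum_abs _ _
      _ ≤ _ := by
          refine Finset.sum_le_sum fun k hk => ?_
          rw [abs_mul, abs_of_nonneg (bb_nonneg ht0 ht1)]
          exact mul_le_mul_of_nonneg_right (key1 k hk) (bb_nonneg ht0 ht1)
  -- variance bound
  have htt : t * (1 - t) ≤ 1 / 4 := by nlinarith [sq_nonneg (t - 1 / 2)]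
  have hvar_bound : K * (((β - α) * b m) ^ 2 / (m : ℝ) ^ 2) * ((m : ℝ) * t * (1 - t))
      ≤ D * ((b m) ^ 2 / (m : ℝ)) := by
    have hA : K * (((β - α) * b m) ^ 2 / (m : ℝ) ^ 2) * ((m : ℝ) * t * (1 - t))
        = (K * (β - α) ^ 2 * (b m) ^ 2 / (m : ℝ)) * (t * (1 - t)) := by
      field_simp
    have hB : 0 ≤ K * (β - α) ^ 2 * (b m) ^ 2 / (m : ℝ) := by positivity
    rw [hA]
    calc (K * (β - α) ^ 2 * (b m) ^ 2 / (m : ℝ)) * (t * (1 - t))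
        ≤ (K * (β - α) ^ 2 * (b m) ^ 2 / (m : ℝ)) * (1 / 4) :=
          mul_le_mul_of_nonneg_left htt hB
      _ = D * ((b m) ^ 2 / (m : ℝ)) := by rw [hD]; ring
  -- final numeric estimate
  have hq0 : (0 : ℝ) ≤ (b m) ^ 2 / (m : ℝ) := by positivity
  have h := hN m hm
  rw [Real.dist_eq, sub_zero, abs_of_nonneg hq0] at h
  have hkey2 : D * (ε / (2 * (D + 1))) + ε / (2 * (D + 1)) = ε / 2 := by
    field_simp
  have hε' : 0 < ε / (2 * (D + 1)) := by positivity
  have hDq : D * ((b m) ^ 2 / (m : ℝ)) ≤ D * (ε / (2 * (D + 1))) :=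
    mul_le_mul_of_nonneg_left h.le hD0
  have hfinal : D * ((b m) ^ 2 / (m : ℝ)) < ε / 2 := by linarith
  linarith [hbound, hvar_bound, hfinal]
end

section
/- Let α < β, b > 0, let φ₁, φ₂ : ℝ → ℝ be continuous with φ₁(x) < φ₂(x) for all x ∈ J = [αb, βb], let m ≥ 1 be a natural number, and let m_k ≥ 1 be positive integers for 0 ≤ k ≤ m. Then for every x ∈ J and every y ∈ ℝ, writing r = (y − φ₁(x))/(φ₂(x) − φ₁(x)), the bivariate shifted Bernstein–Chlodowsky–Stancu operator applied to the function (x,y) ↦ y² satisfies the exact identity B̃_m^{Cl}[y²; Δ](x, y) = r² · B̃_m^{Cl}((φ₂ − φ₁)², J)(x) + 2r · B̃_m^{Cl}((φ₂ − φ₁)·φ₁, J)(x) + B̃_m^{Cl}(φ₁², J)(x) + r·(1 − r) · Σ_{k=0}^{m} (1/m_k) · (φ̃₂(k/m) − φ̃₁(k/m))² · q̃_{m,k}(x; J), where B̃_m^{Cl}(h, J)(x) = Σ_{k=0}^{m} h((β−α)·k·b/m + αb) · q̃_{m,k}(x; J) denotes the univariate shifted Bernstein–Chlodowsky operator. -/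
open Finset Filter Real

lemma beval' (n ν : ℕ) (r : ℝ) :
    (bernsteinPolynomial ℝ n ν).eval r = (n.choose ν : ℝ) * r ^ ν * (1 - r) ^ (n - ν) := by
  simp [bernsteinPolynomial]

lemma b0' (n : ℕ) (r : ℝ) :
    ∑ j ∈ Finset.range (n + 1), (n.choose j : ℝ) * r ^ j * (1 - r) ^ (n - j) = 1 := by
  have := congrArg (Polynomial.eval r) (bernsteinPolynomial.sum ℝ n)
  simpa [Polynomial.eval_finset_sum, beval'] using this

lemma b1' (n : ℕ) (r : ℝ) :
    ∑ j ∈ Finset.range (n + 1), (j : ℝ) * ((n.choose j : ℝ) * r ^ j * (1 - r) ^ (n - j))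
      = n * r := by
  have h := congrArg (Polynomial.eval r) (bernsteinPolynomial.sum_smul ℝ n)
  simp only [Polynomial.eval_finset_sum, Polynomial.eval_smul, beval', nsmul_eq_mul,
    Polynomial.eval_mul, Polynomial.eval_natCast, Polynomial.eval_X] at h
  exact h

lemma b2' (n : ℕ) (r : ℝ) :
    ∑ j ∈ Finset.range (n + 1),
        ((j * (j - 1) : ℕ) : ℝ) * ((n.choose j : ℝ) * r ^ j * (1 - r) ^ (n - j))
      = ((n * (n - 1) : ℕ) : ℝ) * r ^ 2 := by
  have h := congrArg (Polynomial.eval r) (bernsteinPolynomial.sum_mul_smul ℝ n)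
  simp only [Polynomial.eval_finset_sum, Polynomial.eval_smul, beval', nsmul_eq_mul,
    Polynomial.eval_mul, Polynomial.eval_natCast, Polynomial.eval_X, Polynomial.eval_pow] at h
  exact h

lemma b2r (n : ℕ) (r : ℝ) :
    ∑ j ∈ Finset.range (n + 1),
        (j : ℝ) * ((j : ℝ) - 1) * ((n.choose j : ℝ) * r ^ j * (1 - r) ^ (n - j))
      = (n : ℝ) * ((n : ℝ) - 1) * r ^ 2 := by
  have e : ∀ j : ℕ, 1 ≤ j → ((j * (j - 1) : ℕ) : ℝ) = (j : ℝ) * ((j : ℝ) - 1) := by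
    intro j hj; push_cast [Nat.cast_sub hj]; ring
  cases n with
  | zero => simp
  | succ i =>
    have h := b2' (i + 1) r
    rw [e (i + 1) (by omega)] at h
    rw [← h]
    refine Finset.sum_congr rfl fun j _ => ?_
    cases j with
    | zero => simp
    | succ l => rw [e (l + 1) (by omega)]

lemma innerSum (n : ℕ) (hn : 1 ≤ n) (r c d : ℝ) :
    ∑ j ∈ Finset.range (n + 1),
        (c * ((j : ℝ) / n) + d) ^ 2 * ((n.choose j : ℝ) * r ^ j * (1 - r) ^ (n - j))
      = r ^ 2 * c ^ 2 + 2 * r * c * d + d ^ 2 + r * (1 - r) * (1 / n) * c ^ 2 := by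
  have hn0 : (n : ℝ) ≠ 0 := Nat.cast_ne_zero.mpr (by omega)
  have step : ∀ j ∈ Finset.range (n + 1),
      (c * ((j : ℝ) / n) + d) ^ 2 * ((n.choose j : ℝ) * r ^ j * (1 - r) ^ (n - j))
        = (c ^ 2 / n ^ 2) *
            ((j : ℝ) * ((j : ℝ) - 1) * ((n.choose j : ℝ) * r ^ j * (1 - r) ^ (n - j)))
          + (c ^ 2 / n ^ 2 + 2 * c * d / n) *
            ((j : ℝ) * ((n.choose j : ℝ) * r ^ j * (1 - r) ^ (n - j)))
          + d ^ 2 * ((n.choose j : ℝ) * r ^ j * (1 - r) ^ (n - j)) := by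
    intro j _; field_simp; ring
  rw [Finset.sum_congr rfl step]
  rw [Finset.sum_add_distrib, Finset.sum_add_distrib, ← Finset.mul_sum, ← Finset.mul_sum,
    ← Finset.mul_sum, b2r, b1', b0']
  field_simp
  ring

theorem stmt16 (α β b : ℝ) (hαβ : α < β) (hb : 0 < b)
    (φ₁ φ₂ : ℝ → ℝ) (hφ₁ : Continuous φ₁) (hφ₂ : Continuous φ₂)
    (hφ : ∀ x ∈ Set.Icc (α * b) (β * b), φ₁ x < φ₂ x)
    (m : ℕ) (hm : 1 ≤ m) (mk : ℕ → ℕ) (hmk : ∀ k ≤ m, 1 ≤ mk k)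
    (x : ℝ) (hx : x ∈ Set.Icc (α * b) (β * b)) (y : ℝ) :
    BivCl α β b φ₁ φ₂ m mk (fun _ t => t ^ 2) x y =
      ((y - φ₁ x) / (φ₂ x - φ₁ x)) ^ 2 * BCl α β b m (fun t => (φ₂ t - φ₁ t) ^ 2) x +
        2 * ((y - φ₁ x) / (φ₂ x - φ₁ x)) * BCl α β b m (fun t => (φ₂ t - φ₁ t) * φ₁ t) x +
        BCl α β b m (fun t => (φ₁ t) ^ 2) x +
        ((y - φ₁ x) / (φ₂ x - φ₁ x)) * (1 - (y - φ₁ x) / (φ₂ x - φ₁ x)) *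
          ∑ k ∈ Finset.range (m + 1),
            (1 / (mk k : ℝ)) *
              (φ₂ ((β - α) * b * ((k : ℝ) / m) + α * b) -
                φ₁ ((β - α) * b * ((k : ℝ) / m) + α * b)) ^ 2 *
              qt α β b m k x := by
  have hD : φ₂ x - φ₁ x ≠ 0 := sub_ne_zero.mpr (hφ x hx).ne'
  set r : ℝ := (y - φ₁ x) / (φ₂ x - φ₁ x) with hr
  have hs : (φ₂ x - y) / (φ₂ x - φ₁ x) = 1 - r := by
    rw [hr]; field_simp; ring
  have harg : ∀ k : ℕ, (β - α) * (k : ℝ) * b / m + α * b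
      = (β - α) * b * ((k : ℝ) / m) + α * b := fun k => by ring
  have key : ∀ k ∈ Finset.range (m + 1),
      (∑ j ∈ Finset.range (mk k + 1),
        (fun _ t => t ^ 2) ((β - α) * b * ((k : ℝ) / m) + α * b)
          ((φ₂ ((β - α) * b * ((k : ℝ) / m) + α * b) -
              φ₁ ((β - α) * b * ((k : ℝ) / m) + α * b)) * ((j : ℝ) / mk k) +
            φ₁ ((β - α) * b * ((k : ℝ) / m) + α * b)) *
          qt α β b m k x * qy φ₁ φ₂ x (mk k) j y)
      = (r ^ 2 * (φ₂ ((β - α) * b * ((k : ℝ) / m) + α * b) -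
              φ₁ ((β - α) * b * ((k : ℝ) / m) + α * b)) ^ 2
          + 2 * r * (φ₂ ((β - α) * b * ((k : ℝ) / m) + α * b) -
              φ₁ ((β - α) * b * ((k : ℝ) / m) + α * b)) *
            φ₁ ((β - α) * b * ((k : ℝ) / m) + α * b)
          + φ₁ ((β - α) * b * ((k : ℝ) / m) + α * b) ^ 2
          + r * (1 - r) * (1 / mk k) * (φ₂ ((β - α) * b * ((k : ℝ) / m) + α * b) -
              φ₁ ((β - α) * b * ((k : ℝ) / m) + α * b)) ^ 2) * qt α β b m k x := by
    intro k hk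
    have hmk' : 1 ≤ mk k := hmk k (Nat.lt_succ_iff.mp (Finset.mem_range.mp hk))
    calc (∑ j ∈ Finset.range (mk k + 1), _)
        = (∑ j ∈ Finset.range (mk k + 1),
            ((φ₂ ((β - α) * b * ((k : ℝ) / m) + α * b) -
              φ₁ ((β - α) * b * ((k : ℝ) / m) + α * b)) * ((j : ℝ) / mk k) +
              φ₁ ((β - α) * b * ((k : ℝ) / m) + α * b)) ^ 2 *
            (((mk k).choose j : ℝ) * r ^ j * (1 - r) ^ (mk k - j))) * qt α β b m k x := by
          rw [Finset.sum_mul]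
          refine Finset.sum_congr rfl fun j _ => ?_
          simp only [qy, hs, ← hr]
          ring
      _ = _ := by rw [innerSum (mk k) hmk' r _ _]
  unfold BivCl
  rw [Finset.sum_congr rfl key]
  unfold BCl
  rw [Finset.mul_sum, Finset.mul_sum, Finset.mul_sum, ← Finset.sum_add_distrib,
    ← Finset.sum_add_distrib, ← Finset.sum_add_distrib]
  refine Finset.sum_congr rfl fun k _ => ?_
  rw [harg k]
  ring
end
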